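/- In the graded ring R = ℤ[t_1, ..., t_i]/(t_a² - t_a·t_{a-1} : a = 1, ..., i) with t_0 = 0, the identity (1 + t_i)·∏_{a=1}^{i} (1 - t_a + t_{a-1}) = 1 holds. -/
import Mathlib


open MvPolynomial in
/-- In `ℤ[t_0,…,t_i]/(t_0, t_a² - t_a t_{a-1})` (so that `t_0 = 0`),
`(1 + t_i) · ∏_{a=1}^{i} (1 - t_a + t_{a-1}) = 1`. -/
theorem stmt_13 (i : ℕ)
    (I : Ideal (MvPolynomial (Fin (i + 1)) ℤ))
    (hI : I = Ideal.span ({X 0} ∪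
      Set.range fun a : Fin i => (X a.succ) ^ 2 - X a.succ * X a.castSucc))
    (t : Fin (i + 1) → MvPolynomial (Fin (i + 1)) ℤ ⧸ I)
    (ht : ∀ a, t a = Ideal.Quotient.mk I (X a)) :
    (1 + t (Fin.last i)) * ∏ a : Fin i, (1 - t a.succ + t a.castSucc) = 1 := by
  -- t 0 = 0 in the quotient
  have h0 : t 0 = 0 := by
    rw [ht, Ideal.Quotient.eq_zero_iff_mem, hI]
    exact Ideal.subset_span (Or.inl rfl)
  -- the quadratic relations
  have hrel : ∀ a : Fin i, t a.succ * t a.succ = t a.succ * t a.castSucc := by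
    intro a
    have : Ideal.Quotient.mk I ((X a.succ) ^ 2 - X a.succ * X a.castSucc) = 0 := by
      rw [Ideal.Quotient.eq_zero_iff_mem, hI]
      exact Ideal.subset_span (Or.inr ⟨a, rfl⟩)
    rw [map_sub, sub_eq_zero] at this
    simp only [ht, ← map_mul]
    rw [show (X a.succ : MvPolynomial (Fin (i+1)) ℤ) * X a.succ = (X a.succ) ^ 2 by ring]
    exact this
  -- a ℕ-indexed version of t
  set u : ℕ → MvPolynomial (Fin (i + 1)) ℤ ⧸ I := fun n => t ⟨min n i, by omega⟩ with hu
  have hsucc : ∀ a : Fin i, u (a.val + 1) = t a.succ := by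
    intro a
    show t ⟨min (a.val + 1) i, _⟩ = t a.succ
    congr 1
    ext
    have := a.isLt
    simp only [Fin.val_succ]
    omega
  have hcast : ∀ a : Fin i, u a.val = t a.castSucc := by
    intro a
    show t ⟨min a.val i, _⟩ = t a.castSucc
    congr 1
    ext
    have := a.isLt
    simp only [Fin.coe_castSucc]
    omega
  have key : ∀ k, k ≤ i →
      (1 + u k) * ∏ a ∈ Finset.range k, (1 - u (a + 1) + u a) = 1 := by
    intro k
    induction k with
    | zero =>
      intro _
      have : u 0 = 0 := by
        show t ⟨min 0 i, _⟩ = 0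
        convert h0 using 2
        ext
        simp
      simp [this]
    | succ n ih =>
      intro hn
      have hni : n ≤ i := by omega
      rw [Finset.prod_range_succ, mul_comm (∏ a ∈ Finset.range n, (1 - u (a + 1) + u a)), ← mul_assoc]
      have step : (1 + u (n + 1)) * (1 - u (n + 1) + u n) = 1 + u n := by
        have hr := hrel ⟨n, by omega⟩
        rw [show u (n+1) = u ((⟨n, by omega⟩ : Fin i).val + 1) from rfl,
          show u n = u ((⟨n, by omega⟩ : Fin i).val) from rfl, hsucc, hcast]
        rw [show (1 + t (Fin.succ ⟨n, by omega⟩)) * (1 - t (Fin.succ ⟨n, by omega⟩) + t (Fin.castSucc ⟨n, by omega⟩)) = 1 + t (Fin.castSucc ⟨n, by omega⟩) + (t (Fin.succ ⟨n, by omega⟩) * t (Fin.castSucc ⟨n, by omega⟩) - t (Fin.succ ⟨n, by omega⟩) * t (Fin.succ ⟨n, by omega⟩)) by ring, hr]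
        ring
      rw [step]
      exact ih hni
  have hprod : ∏ a : Fin i, (1 - t a.succ + t a.castSucc)
      = ∏ a ∈ Finset.range i, (1 - u (a + 1) + u a) := by
    rw [Finset.prod_range fun a => (1 - u (a + 1) + u a)]
    exact Finset.prod_congr rfl fun a _ => by rw [hsucc, hcast]
  have hlast : t (Fin.last i) = u i := by
    show _ = t ⟨min i i, _⟩
    congr 1
    ext
    simp only [Fin.last]
    omega
  rw [hprod, hlast]
  exact key i le_rfl
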